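/- For every real λ > 0, ∫₀¹ 1/((1−t) + t·λ) · 1/(π·√(t·(1−t))) dt = λ^{−1/2}. -/

import Mathlib

open MeasureTheory

private lemma arcsine_deriv (l : ℝ) (hl : 0 < l) {x : ℝ} (hx : x ∈ Set.Ioo (0:ℝ) 1) :
    HasDerivAt (fun t : ℝ => 2 / (Real.pi * Real.sqrt l) *
        Real.arcsin (Real.sqrt (l * t / ((1 - t) + t * l))))
      ((1 / ((1 - x) + x * l)) * (1 / (Real.pi * Real.sqrt (x * (1 - x))))) x := by
  obtain ⟨hx0, hx1⟩ := hx
  set D : ℝ := (1 - x) + x * l with hDdef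
  have hD : 0 < D := by
    have : 0 < (1 - x) := by linarith
    have : 0 < x * l := mul_pos hx0 hl
    positivity
  have hu_pos : 0 < l * x / D := by positivity
  have hu_lt : l * x / D < 1 := by
    rw [div_lt_one hD]
    nlinarith
  -- derivative of inner rational function
  have h1 : HasDerivAt (fun t : ℝ => l * t / ((1 - t) + t * l)) (l / D ^ 2) x := by
    have hnum : HasDerivAt (fun t : ℝ => l * t) l x := by
      simpa using (hasDerivAt_id x).const_mul l
    have hden : HasDerivAt (fun t : ℝ => (1 - t) + t * l) (l - 1) x := by
      have e : (l - 1) = -1 + 1 * l := by ring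
      rw [e]
      exact ((hasDerivAt_id x).const_sub 1).add ((hasDerivAt_id x).mul_const l)
    have := hnum.div hden hD.ne'
    refine this.congr_deriv (Eq.symm ?_)
    rw [hDdef]
    field_simp
    ring
  -- derivative of sqrt of inner
  have h2 : HasDerivAt (fun t : ℝ => Real.sqrt (l * t / ((1 - t) + t * l)))
      ((l / D ^ 2) / (2 * Real.sqrt (l * x / D))) x := by
    exact h1.sqrt hu_pos.ne'
  -- arcsin composition
  have hs_lt : Real.sqrt (l * x / D) < 1 := by
    rw [show (1:ℝ) = Real.sqrt 1 by simp]
    exact Real.sqrt_lt_sqrt hu_pos.le hu_lt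
  have hs_pos : 0 < Real.sqrt (l * x / D) := Real.sqrt_pos.mpr hu_pos
  have h3 := (Real.hasDerivAt_arcsin (by linarith : Real.sqrt (l * x / D) ≠ -1)
      hs_lt.ne).comp x h2
  have h4 := h3.const_mul (2 / (Real.pi * Real.sqrt l))
  refine h4.congr_deriv (Eq.symm ?_)
  -- algebraic identification of the derivative
  have hsq : Real.sqrt (l * x / D) ^ 2 = l * x / D := Real.sq_sqrt hu_pos.le
  rw [hsq]
  have h1u : 1 - l * x / D = (1 - x) / D := by field_simp; ring
  have e1 : Real.sqrt ((1 - x) / D) = Real.sqrt (1 - x) / Real.sqrt D :=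
    Real.sqrt_div (by linarith) D
  have e2 : Real.sqrt (l * x / D) = Real.sqrt l * Real.sqrt x / Real.sqrt D := by
    rw [Real.sqrt_div (by positivity), Real.sqrt_mul hl.le]
  have e3 : Real.sqrt (x * (1 - x)) = Real.sqrt x * Real.sqrt (1 - x) :=
    Real.sqrt_mul hx0.le _
  have hsl : Real.sqrt l * Real.sqrt l = l := Real.mul_self_sqrt hl.le
  have hsD : Real.sqrt D * Real.sqrt D = D := Real.mul_self_sqrt hD.le
  have hsDpos : 0 < Real.sqrt D := Real.sqrt_pos.mpr hD
  have hslpos : 0 < Real.sqrt l := Real.sqrt_pos.mpr hl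
  have hsxpos : 0 < Real.sqrt x := Real.sqrt_pos.mpr hx0
  have hs1xpos : 0 < Real.sqrt (1 - x) := Real.sqrt_pos.mpr (by linarith)
  have hpi : Real.pi ≠ 0 := Real.pi_ne_zero
  rw [h1u, e1, e2, e3]
  field_simp
  linear_combination D * hsl - l * hsD

theorem arcsine_resolvent_integral (l : ℝ) (hl : 0 < l) :
    ∫ t in Set.Ioo (0 : ℝ) 1,
      (1 / ((1 - t) + t * l)) * (1 / (Real.pi * Real.sqrt (t * (1 - t))))
      = l ^ (-(1 : ℝ) / 2) := by
  set F : ℝ → ℝ := fun t => 2 / (Real.pi * Real.sqrt l) *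
      Real.arcsin (Real.sqrt (l * t / ((1 - t) + t * l)))
  have hderiv : ∀ x ∈ Set.Ioo (0:ℝ) 1, HasDerivAt F
      ((1 / ((1 - x) + x * l)) * (1 / (Real.pi * Real.sqrt (x * (1 - x))))) x :=
    fun x hx => arcsine_deriv l hl hx
  have hcont : ContinuousOn F (Set.Icc 0 1) := by
    apply ContinuousOn.mul continuousOn_const
    apply Real.continuous_arcsin.comp_continuousOn
    apply ContinuousOn.sqrt
    apply ContinuousOn.div (by fun_prop) (by fun_prop)
    intro x hx
    obtain ⟨h0, h1⟩ := hx
    rcases eq_or_lt_of_le h1 with rfl | h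
    · simpa using hl.ne'
    · have : 0 ≤ x * l := mul_nonneg h0 hl.le
      nlinarith
  have hpos : ∀ x ∈ Set.Ioo (0:ℝ) 1,
      0 ≤ (1 / ((1 - x) + x * l)) * (1 / (Real.pi * Real.sqrt (x * (1 - x)))) := by
    intro x ⟨h0, h1⟩
    have : 0 < (1 - x) + x * l := by nlinarith
    have := Real.pi_pos
    positivity
  have hint : IntervalIntegrable
      (fun x => (1 / ((1 - x) + x * l)) * (1 / (Real.pi * Real.sqrt (x * (1 - x)))))
      volume 0 1 := by
    apply intervalIntegral.intervalIntegrable_deriv_of_nonneg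
    · simpa [Set.uIcc_of_le (by norm_num : (0:ℝ) ≤ 1)] using hcont
    · simpa [min_eq_left (by norm_num : (0:ℝ) ≤ 1), max_eq_right (by norm_num : (0:ℝ) ≤ 1)]
        using hderiv
    · simpa [min_eq_left (by norm_num : (0:ℝ) ≤ 1), max_eq_right (by norm_num : (0:ℝ) ≤ 1)]
        using hpos
  have hftc := intervalIntegral.integral_eq_sub_of_hasDerivAt_of_le (by norm_num : (0:ℝ) ≤ 1)
      hcont hderiv hint
  have hIoo : (∫ t in Set.Ioo (0 : ℝ) 1,
      (1 / ((1 - t) + t * l)) * (1 / (Real.pi * Real.sqrt (t * (1 - t)))))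
      = ∫ t in (0:ℝ)..1,
      (1 / ((1 - t) + t * l)) * (1 / (Real.pi * Real.sqrt (t * (1 - t)))) := by
    rw [intervalIntegral.integral_of_le (by norm_num : (0:ℝ) ≤ 1),
      MeasureTheory.integral_Ioc_eq_integral_Ioo]
  rw [hIoo, hftc]
  have hF1 : F 1 = 2 / (Real.pi * Real.sqrt l) * (Real.pi / 2) := by
    show 2 / (Real.pi * Real.sqrt l) *
        Real.arcsin (Real.sqrt (l * 1 / ((1 - 1) + 1 * l))) = _
    rw [show l * 1 / ((1 - 1) + 1 * l) = 1 by field_simp; ring, Real.sqrt_one, Real.arcsin_one]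
  have hF0 : F 0 = 0 := by simp [F]
  rw [hF1, hF0]
  have hpi := Real.pi_ne_zero
  have hsl : Real.sqrt l ≠ 0 := (Real.sqrt_pos.mpr hl).ne'
  rw [show (-(1:ℝ)/2) = -(1/2) by ring, Real.rpow_neg hl.le, ← Real.sqrt_eq_rpow]
  field_simp
  ring
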